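/- In the setting of the composed scheme: let λ be a finitely supported distribution on states with n actions, fix K ≥ 1, let F map each K-tuple of states to a direct scheme on indices [K], and define φ on input θ by drawing ℓ uniform in [K], drawing θ_k ~ λ i.i.d. for k ≠ ℓ, setting θ_ℓ = θ, and outputting a signal from F(θ_1,…,θ_K)(ℓ). If the receiver follows the recommendations of φ, then the expected sender utility of φ when θ ~ λ equals the expectation, over K i.i.d. draws (θ_1,…,θ_K) from λ, of the empirical sender utility (1/K) Σ_{k=1}^K Σ_{i=1}^n F(θ_1,…,θ_K)(k)(σ_i) · s_i(θ_k). -/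
import Mathlib


open Finset

namespace Persuasion

variable {Θ : Type*} [Fintype Θ] {n : ℕ}

/-- `μ` is a probability distribution on the finite type `Θ`. -/
def IsDist (μ : Θ → ℝ) : Prop := (∀ θ, 0 ≤ μ θ) ∧ ∑ θ, μ θ = 1

/-- a direct signaling scheme: a probability distribution over the `n` signals
(signal `i` recommending action `i`) for each state -/
def IsScheme (φ : Θ → Fin n → ℝ) : Prop :=
  (∀ θ i, 0 ≤ φ θ i) ∧ ∀ θ, ∑ i, φ θ i = 1

/-- `ε`-incentive compatibility of a direct scheme for the distribution `μ`
(`ε = 0` gives exact incentive compatibility) -/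
def EIC (μ : Θ → ℝ) (r : Θ → Fin n → ℝ) (ε : ℝ) (φ : Θ → Fin n → ℝ) : Prop :=
  ∀ i j : Fin n,
    ∑ θ, μ θ * φ θ i * (r θ j - ε) ≤ ∑ θ, μ θ * φ θ i * r θ i

/-- expected sender utility of a direct scheme under `μ`, assuming the receiver
follows the recommendations -/
def senderUtil (μ : Θ → ℝ) (s : Θ → Fin n → ℝ) (φ : Θ → Fin n → ℝ) : ℝ :=
  ∑ θ, ∑ i, μ θ * φ θ i * s θ i

end Persuasion

open Persuasion

namespace Persuasion

/-- the composed scheme of Algorithm 2: on input `θ`, draw `ℓ` uniformly from `[K]`,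
draw `θ_k ~ lam` i.i.d. for `k ≠ ℓ`, set `θ_ℓ = θ`, and output a signal drawn from
`F (θ_1, …, θ_K) ℓ`.  `composed lam F θ i` is the overall probability that signal `i`
is output on input `θ`. -/
noncomputable def composed {Θ : Type*} [Fintype Θ] [DecidableEq Θ] {n K : ℕ}
    (lam : Θ → ℝ) (F : (Fin K → Θ) → Fin K → Fin n → ℝ) (θ : Θ) (i : Fin n) : ℝ :=
  (1 / (K : ℝ)) * ∑ l : Fin K, ∑ v : Fin K → Θ,
    (if v l = θ then ∏ k ∈ Finset.univ.erase l, lam (v k) else 0) * F v l i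

end Persuasion

/-- if the receiver follows the recommendations of the composed
scheme, then its expected sender utility under `lam` equals the expectation, over `K`
i.i.d. draws from `lam`, of the empirical sender utility of the scheme produced by
`F` on the sampled tuple. -/
theorem composed_scheme_utility
    {Θ : Type*} [Fintype Θ] [DecidableEq Θ] {n K : ℕ} (hK : 1 ≤ K)
    (lam : Θ → ℝ) (hlam : IsDist lam)
    (s : Θ → Fin n → ℝ)
    (F : (Fin K → Θ) → Fin K → Fin n → ℝ)
    (hF : ∀ v k, (∀ i, 0 ≤ F v k i) ∧ ∑ i, F v k i = 1) :
    ∑ θ, lam θ * ∑ i, composed lam F θ i * s θ i =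
      ∑ v : Fin K → Θ, (∏ k, lam (v k)) *
        ((1 / (K : ℝ)) * ∑ k, ∑ i, F v k i * s (v k) i) := by
  have key : ∀ (l : Fin K) (v : Fin K → Θ),
      lam (v l) * ∏ k ∈ Finset.univ.erase l, lam (v k) = ∏ k, lam (v k) := by
    intro l v
    rw [← Finset.mul_prod_erase Finset.univ (fun k => lam (v k)) (Finset.mem_univ l)]
  calc ∑ θ, lam θ * ∑ i, composed lam F θ i * s θ i
      = ∑ θ : Θ, ∑ i : Fin n, ∑ l : Fin K, ∑ v : Fin K → Θ, (1 / (K : ℝ)) * (lam θ * ((if v l = θ then ∏ k ∈ Finset.univ.erase l, lam (v k) else 0) * F v l i) * s θ i) := by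
        refine Finset.sum_congr rfl fun θ _ => ?_
        rw [Finset.mul_sum]
        refine Finset.sum_congr rfl fun i _ => ?_
        simp only [composed, Finset.mul_sum, Finset.sum_mul]
        refine Finset.sum_congr rfl fun l _ => Finset.sum_congr rfl fun v _ => by ring
    _ = ∑ θ : Θ, ∑ l : Fin K, ∑ i : Fin n, ∑ v : Fin K → Θ, (1 / (K : ℝ)) * (lam θ * ((if v l = θ then ∏ k ∈ Finset.univ.erase l, lam (v k) else 0) * F v l i) * s θ i) :=
        Finset.sum_congr rfl fun θ _ => Finset.sum_comm
    _ = ∑ l : Fin K, ∑ θ : Θ, ∑ i : Fin n, ∑ v : Fin K → Θ, (1 / (K : ℝ)) * (lam θ * ((if v l = θ then ∏ k ∈ Finset.univ.erase l, lam (v k) else 0) * F v l i) * s θ i) := Finset.sum_comm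
    _ = ∑ l : Fin K, ∑ θ : Θ, ∑ v : Fin K → Θ, ∑ i : Fin n, (1 / (K : ℝ)) * (lam θ * ((if v l = θ then ∏ k ∈ Finset.univ.erase l, lam (v k) else 0) * F v l i) * s θ i) :=
        Finset.sum_congr rfl fun l _ => Finset.sum_congr rfl fun θ _ => Finset.sum_comm
    _ = ∑ l : Fin K, ∑ v : Fin K → Θ, ∑ θ : Θ, ∑ i : Fin n, (1 / (K : ℝ)) * (lam θ * ((if v l = θ then ∏ k ∈ Finset.univ.erase l, lam (v k) else 0) * F v l i) * s θ i) :=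
        Finset.sum_congr rfl fun l _ => Finset.sum_comm
    _ = ∑ l : Fin K, ∑ v : Fin K → Θ,
          (1 / (K : ℝ)) * ((∏ k, lam (v k)) * ∑ i, F v l i * s (v l) i) := by
        refine Finset.sum_congr rfl fun l _ => Finset.sum_congr rfl fun v _ => ?_
        rw [Finset.sum_eq_single (v l)]
        · simp only [if_pos rfl, if_true]
          rw [← key l v]
          simp only [Finset.mul_sum]
          exact Finset.sum_congr rfl fun i _ => by ring
        · intro θ _ hθ
          simp [if_neg (Ne.symm hθ)]
        · intro h; exact absurd (Finset.mem_univ _) h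
    _ = ∑ v : Fin K → Θ, (∏ k, lam (v k)) *
          ((1 / (K : ℝ)) * ∑ k, ∑ i, F v k i * s (v k) i) := by
        rw [Finset.sum_comm]
        refine Finset.sum_congr rfl fun v _ => ?_
        simp only [Finset.mul_sum]
        exact Finset.sum_congr rfl fun l _ => Finset.sum_congr rfl fun i _ => by ring
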